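/- Let R > 0. Let f : ℝ → ℝ be square-integrable, let ψ : ℝ → ℝ be square-integrable with support contained in [−R, R], and let ψ₂ : ℝ → ℝ be K-Lipschitz with support contained in [−R, R]. Define W(a, b) = ∫_ℝ f(y)·|a|^{−1/2}·ψ((y − b)/a) dy and the large-scale part f_L(x) = ∫_{|a| ≥ 1} ∫_ℝ a^{−2}·W(a, b)·|a|^{−1/2}·ψ₂((x − b)/a) db da. Then there exists a constant C‴ ≥ 0 such that |f_L(x + δ) − f_L(x)| ≤ C‴·|δ| for every x ∈ ℝ and every δ with |δ| ≤ 1. -/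

import Mathlib

open MeasureTheory Real Set

/-- Cauchy–Schwarz for real integrals. -/
lemma cs_integral {u v : ℝ → ℝ} (hu : MemLp u 2 (volume : Measure ℝ))
    (hv : MemLp v 2 (volume : Measure ℝ)) :
    |∫ y, u y * v y| ≤ Real.sqrt (∫ y, u y ^ 2) * Real.sqrt (∫ y, v y ^ 2) := by
  have h2 : (ENNReal.ofReal (2:ℝ)) = 2 := by norm_num
  have e1 : (fun y => |u y| ^ (2:ℝ)) = fun y => u y ^ 2 := by
    funext y; rw [Real.rpow_two, sq_abs]
  have e2 : (fun y => |v y| ^ (2:ℝ)) = fun y => v y ^ 2 := by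
    funext y; rw [Real.rpow_two, sq_abs]
  have habs : ∫ y, |u y| * |v y| ≤
      (∫ y, |u y| ^ (2:ℝ)) ^ ((1:ℝ)/2) * (∫ y, |v y| ^ (2:ℝ)) ^ ((1:ℝ)/2) := by
    refine integral_mul_le_Lp_mul_Lq_of_nonneg (by constructor <;> norm_num)
      (Filter.Eventually.of_forall fun y => abs_nonneg _)
      (Filter.Eventually.of_forall fun y => abs_nonneg _) ?_ ?_
    · rw [h2]; exact hu.abs
    · rw [h2]; exact hv.abs
  rw [e1, e2] at habs
  calc |∫ y, u y * v y| ≤ ∫ y, ‖u y * v y‖ := by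
        simpa using norm_integral_le_integral_norm (fun y => u y * v y)
    _ = ∫ y, |u y| * |v y| := by simp [abs_mul]
    _ ≤ (∫ y, u y ^ 2) ^ ((1:ℝ)/2) * (∫ y, v y ^ 2) ^ ((1:ℝ)/2) := habs
    _ = Real.sqrt (∫ y, u y ^ 2) * Real.sqrt (∫ y, v y ^ 2) := by
        rw [Real.sqrt_eq_rpow, Real.sqrt_eq_rpow]

/-- a.e. equality is preserved by composing with a nondegenerate affine map on `ℝ`. -/
lemma ae_comp_affine {g g' : ℝ → ℝ} (h : g =ᵐ[(volume : Measure ℝ)] g')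
    {a : ℝ} (ha : a ≠ 0) (b : ℝ) :
    (fun y => g ((y - b) / a)) =ᵐ[(volume : Measure ℝ)] fun y => g' ((y - b) / a) := by
  have hN : volume {z : ℝ | g z ≠ g' z} = 0 := h
  have key : volume ((fun y : ℝ => (y - b) / a) ⁻¹' {z | g z ≠ g' z}) = 0 := by
    have hs : (fun y : ℝ => (y - b) / a) ⁻¹' {z | g z ≠ g' z}
        = (fun y : ℝ => y + (-b)) ⁻¹' ((fun y : ℝ => y * a⁻¹) ⁻¹' {z | g z ≠ g' z}) := by
      ext y; simp [div_eq_mul_inv, sub_eq_add_neg]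
    rw [hs, measure_preimage_add_right, Real.volume_preimage_mul_right (inv_ne_zero ha), hN,
      mul_zero]
  exact key

/-- Integrability of `|a| ^ r` on `{a | 1 ≤ |a|}` for `r < -1`. -/
lemma integrableOn_abs_rpow {r : ℝ} (hr : r < -1) :
    IntegrableOn (fun a : ℝ => |a| ^ r) {a : ℝ | 1 ≤ |a|} (volume : Measure ℝ) := by
  have hset : {a : ℝ | 1 ≤ |a|} = Iic (-1 : ℝ) ∪ Ici (1 : ℝ) := by
    ext a
    simp only [mem_setOf_eq, mem_union, mem_Iic, mem_Ici, le_abs]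
    constructor
    · rintro (h | h)
      · right; exact h
      · left; linarith
    · rintro (h | h)
      · right; linarith
      · left; exact h
  have hIci : IntegrableOn (fun a : ℝ => |a| ^ r) (Ici (1:ℝ)) volume := by
    rw [integrableOn_Ici_iff_integrableOn_Ioi]
    refine (integrableOn_Ioi_rpow_of_lt hr one_pos).congr_fun (fun a haa => ?_) measurableSet_Ioi
    rw [abs_of_pos (lt_trans one_pos haa)]
  have hIic : IntegrableOn (fun a : ℝ => |a| ^ r) (Iic (-1:ℝ)) volume := by
    have h1 : Integrable (Set.indicator (Ici (1:ℝ)) (fun a : ℝ => |a| ^ r)) volume :=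
      (integrable_indicator_iff measurableSet_Ici).2 hIci
    have h2 : Integrable (fun a : ℝ => Set.indicator (Ici (1:ℝ)) (fun t : ℝ => |t| ^ r) (-a))
        volume := h1.comp_neg
    have h3 : (fun a : ℝ => Set.indicator (Ici (1:ℝ)) (fun t : ℝ => |t| ^ r) (-a))
        = Set.indicator (Iic (-1:ℝ)) (fun a : ℝ => |a| ^ r) := by
      funext a
      by_cases hav : a ≤ -1
      · rw [Set.indicator_of_mem (show -a ∈ Ici (1:ℝ) by simp only [mem_Ici]; linarith),
          Set.indicator_of_mem (show a ∈ Iic (-1:ℝ) by simpa using hav), abs_neg]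
      · rw [Set.indicator_of_notMem (show -a ∉ Ici (1:ℝ) by simp only [mem_Ici]; intro hc; exact hav (by linarith)),
          Set.indicator_of_notMem (show a ∉ Iic (-1:ℝ) by simpa using hav)]
    rw [h3] at h2
    exact (integrable_indicator_iff measurableSet_Iic).1 h2
  rw [hset]
  exact hIic.union hIci

/-- Integrability + integral bound for a bounded function supported near `x`. -/
lemma integrable_and_bound_of_support {g : ℝ → ℝ}
    (hg : AEStronglyMeasurable g (volume : Measure ℝ)) {C x r : ℝ} (hr : 0 ≤ r) (hC : 0 ≤ C)
    (hb : ∀ b, |g b| ≤ C) (hsupp : ∀ b, g b ≠ 0 → |x - b| ≤ r) :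
    Integrable g (volume : Measure ℝ) ∧ |∫ b, g b| ≤ C * (2 * r) := by
  set s : Set ℝ := Metric.closedBall x r with hs
  have hms : MeasurableSet s := measurableSet_closedBall
  have hvol : (volume s).toReal = 2 * r := by
    rw [hs, Real.volume_closedBall, ENNReal.toReal_ofReal (by linarith)]
  have hind : Integrable (s.indicator fun _ : ℝ => C) volume := by
    rw [integrable_indicator_iff hms]
    exact integrableOn_const measure_closedBall_lt_top.ne
  have hle : ∀ b, ‖g b‖ ≤ s.indicator (fun _ : ℝ => C) b := by
    intro b
    by_cases hbs : b ∈ s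
    · rw [Set.indicator_of_mem hbs]; exact hb b
    · rw [Set.indicator_of_notMem hbs]
      have hgb : g b = 0 := by
        by_contra hne
        have hxb : |x - b| ≤ r := hsupp b hne
        refine hbs ?_
        simp only [hs, Metric.mem_closedBall, Real.dist_eq]
        rwa [abs_sub_comm]
      simp [hgb]
  have hgint : Integrable g volume :=
    hind.mono' hg (Filter.Eventually.of_forall hle)
  refine ⟨hgint, ?_⟩
  calc |∫ b, g b| ≤ ∫ b, ‖g b‖ := by simpa using norm_integral_le_integral_norm g
    _ ≤ ∫ b, s.indicator (fun _ : ℝ => C) b :=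
        integral_mono hgint.norm hind hle
    _ = C * (2 * r) := by
        rw [integral_indicator_const C hms, measureReal_def, hvol, smul_eq_mul, mul_comm]

theorem large_scale_part_lipschitz
    (R K : ℝ) (hR : 0 < R)
    (f ψ ψ₂ : ℝ → ℝ) (W : ℝ → ℝ → ℝ) (fL : ℝ → ℝ)
    (hf_L2 : MemLp f 2 (volume : Measure ℝ))
    (hψ_L2 : MemLp ψ 2 (volume : Measure ℝ))
    (hψ_supp : Function.support ψ ⊆ Set.Icc (-R) R)
    (hψ₂_lip : ∀ z t : ℝ, |ψ₂ (z + t) - ψ₂ z| ≤ K * |t|)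
    (hψ₂_supp : Function.support ψ₂ ⊆ Set.Icc (-R) R)
    (hW : ∀ a : ℝ, a ≠ 0 → ∀ b : ℝ,
      W a b = ∫ y : ℝ, f y * (|a| ^ (-(1 : ℝ) / 2) * ψ ((y - b) / a)))
    (hfL : ∀ x : ℝ,
      fL x = ∫ a in {a : ℝ | 1 ≤ |a|},
               ∫ b : ℝ, (a ^ 2)⁻¹ * W a b * (|a| ^ (-(1 : ℝ) / 2) * ψ₂ ((x - b) / a))) :
    ∃ C''' : ℝ, 0 ≤ C''' ∧ ∀ x δ : ℝ, |δ| ≤ 1 →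
      |fL (x + δ) - fL x| ≤ C''' * |δ| := by
  classical
  -- measurable representatives of `f` and `ψ`
  set f' : ℝ → ℝ := hf_L2.1.mk f with hf'def
  have hf'm : StronglyMeasurable f' := hf_L2.1.stronglyMeasurable_mk
  have hf'ae : f =ᵐ[(volume : Measure ℝ)] f' := hf_L2.1.ae_eq_mk
  have hf'L2 : MemLp f' 2 (volume : Measure ℝ) := hf_L2.ae_eq hf'ae
  set ψ' : ℝ → ℝ := hψ_L2.1.mk ψ with hψ'def
  have hψ'm : StronglyMeasurable ψ' := hψ_L2.1.stronglyMeasurable_mk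
  have hψ'ae : ψ =ᵐ[(volume : Measure ℝ)] ψ' := hψ_L2.1.ae_eq_mk
  have hψ'L2 : MemLp ψ' 2 (volume : Measure ℝ) := hψ_L2.ae_eq hψ'ae
  -- basic facts about ψ₂
  have hK0 : 0 ≤ K := by
    have h := hψ₂_lip 0 1
    have h0 := abs_nonneg (ψ₂ (0 + 1) - ψ₂ 0)
    simp only [abs_one, mul_one] at h
    linarith
  set B : ℝ := K * (2 * R + 1) with hBdef
  have hB0 : 0 ≤ B := by positivity
  have hψ₂bdd : ∀ z, |ψ₂ z| ≤ B := by
    intro z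
    by_cases hz : ψ₂ z = 0
    · simp [hz, hB0]
    · have hzR : z ∈ Set.Icc (-R) R := hψ₂_supp hz
      have hout : ψ₂ (z + (2 * R + 1)) = 0 := by
        by_contra hne
        have := hψ₂_supp hne
        have h1 : z + (2 * R + 1) ≤ R := this.2
        have h2 : -R ≤ z := hzR.1
        linarith
      have := hψ₂_lip z (2 * R + 1)
      rw [hout, zero_sub, abs_neg, abs_of_nonneg (by linarith : (0:ℝ) ≤ 2 * R + 1)] at this
      exact this
  have hψ₂cont : Continuous ψ₂ := by
    refine (LipschitzWith.of_dist_le_mul (K := K.toNNReal) (fun p q => ?_)).continuous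
    have h := hψ₂_lip q (p - q)
    rw [add_sub_cancel] at h
    calc dist (ψ₂ p) (ψ₂ q) = |ψ₂ p - ψ₂ q| := Real.dist_eq _ _
      _ ≤ K * |p - q| := h
      _ ≤ (K.toNNReal : ℝ) * dist p q := by
          rw [Real.dist_eq]
          exact mul_le_mul_of_nonneg_right (Real.le_coe_toNNReal K) (abs_nonneg _)
  -- the measurable version of W
  set W' : ℝ → ℝ → ℝ :=
    fun a b => ∫ y : ℝ, f' y * (|a| ^ (-(1:ℝ)/2) * ψ' ((y - b) / a)) with hW'def
  have hW'meas : StronglyMeasurable (fun p : ℝ × ℝ => W' p.1 p.2) := by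
    have hF : Measurable (fun q : (ℝ × ℝ) × ℝ =>
        f' q.2 * (|q.1.1| ^ (-(1:ℝ)/2) * ψ' ((q.2 - q.1.2) / q.1.1))) := by
      have h1 := hf'm.measurable
      have h2 := hψ'm.measurable
      fun_prop
    exact hF.stronglyMeasurable.integral_prod_right'
  have hWW' : ∀ a : ℝ, a ≠ 0 → ∀ b, W a b = W' a b := by
    intro a ha b
    rw [hW a ha b]
    refine integral_congr_ae ?_
    have h1 : (fun y => ψ ((y - b) / a)) =ᵐ[(volume : Measure ℝ)]
        (fun y => ψ' ((y - b) / a)) := ae_comp_affine hψ'ae ha b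
    filter_upwards [hf'ae, h1] with y hy1 hy2
    rw [hy1, hy2]
  -- the scale factor
  set T : ℝ → ℝ := fun a => |a| ^ (-(1:ℝ)/2) with hTdef
  have hTpow : ∀ (n : ℕ) (a : ℝ), (T a) ^ n = |a| ^ (-(n:ℝ)/2) := by
    intro n a
    rw [hTdef, ← Real.rpow_natCast (|a| ^ (-(1:ℝ)/2)) n, ← Real.rpow_mul (abs_nonneg a)]
    ring_nf
  have hTpos : ∀ a : ℝ, a ≠ 0 → 0 < T a := fun a ha =>
    Real.rpow_pos_of_pos (abs_pos.2 ha) _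
  have hT2 : ∀ a : ℝ, a ≠ 0 → (T a) ^ 2 * |a| = 1 := by
    intro a ha
    rw [hTpow 2 a, show -((2:ℕ):ℝ)/2 = -1 by norm_num, Real.rpow_neg_one]
    exact inv_mul_cancel₀ (ne_of_gt (abs_pos.2 ha))
  have hT4 : ∀ a : ℝ, a ≠ 0 → (a ^ 2)⁻¹ = (T a) ^ 4 := by
    intro a ha
    rw [hTpow 4 a, show -((4:ℕ):ℝ)/2 = -2 by norm_num, Real.rpow_neg (abs_nonneg a),
      Real.rpow_two, sq_abs]
  -- constants
  set M : ℝ := Real.sqrt (∫ y, f' y ^ 2) * Real.sqrt (∫ y, ψ' y ^ 2) with hMdef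
  have hM0 : 0 ≤ M := mul_nonneg (Real.sqrt_nonneg _) (Real.sqrt_nonneg _)
  -- the uniform bound on W'
  have hWbd : ∀ a : ℝ, a ≠ 0 → ∀ b, |W' a b| ≤ M := by
    intro a ha b
    set v : ℝ → ℝ := fun y => T a * ψ' ((y - b) / a) with hvdef
    have hvmeas : AEStronglyMeasurable v (volume : Measure ℝ) := by
      have h2 := hψ'm.measurable
      have : Measurable v := by fun_prop
      exact this.aestronglyMeasurable
    have hsq : (fun y => v y ^ 2) = fun y => (T a)^2 * (fun z => ψ' z ^ 2) ((y - b) / a) := by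
      funext y; simp [hvdef, mul_pow]
    have hsqint : Integrable (fun y => v y ^ 2) (volume : Measure ℝ) := by
      rw [hsq]
      exact ((hψ'L2.integrable_sq.comp_div ha).comp_sub_right b).const_mul _
    have hv2 : ∫ y, v y ^ 2 = ∫ y, ψ' y ^ 2 := by
      rw [hsq, integral_const_mul]
      have : (fun y : ℝ => (fun z : ℝ => ψ' z ^ 2) ((y - b) / a))
          = fun y : ℝ => (fun z : ℝ => (fun w : ℝ => ψ' w ^ 2) (z / a)) (y - b) := rfl
      rw [this, integral_sub_right_eq_self (fun z : ℝ => (fun w : ℝ => ψ' w ^ 2) (z / a)) b,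
        MeasureTheory.Measure.integral_comp_div (fun w : ℝ => ψ' w ^ 2) a, smul_eq_mul,
        ← mul_assoc]
      rw [hT2 a ha, one_mul]
    have hvL2 : MemLp v 2 (volume : Measure ℝ) :=
      (memLp_two_iff_integrable_sq hvmeas).2 hsqint
    have := cs_integral hf'L2 hvL2
    rw [hv2] at this
    calc |W' a b| = |∫ y, f' y * v y| := by rw [hW'def]
      _ ≤ Real.sqrt (∫ y, f' y ^ 2) * Real.sqrt (∫ y, ψ' y ^ 2) := this
      _ = M := rfl
  have hTnn : ∀ a : ℝ, 0 ≤ T a := fun a => Real.rpow_nonneg (abs_nonneg a) _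
  -- inner integrand
  set φ : ℝ → ℝ → ℝ → ℝ :=
    fun x a b => (a ^ 2)⁻¹ * W' a b * (|a| ^ (-(1:ℝ)/2) * ψ₂ ((x - b) / a)) with hφdef
  have hφmeas : ∀ x : ℝ, StronglyMeasurable (fun p : ℝ × ℝ => φ x p.1 p.2) := by
    intro x
    have hw := hW'meas.measurable
    have hc := hψ₂cont.measurable
    have h1 : Measurable (fun p : ℝ × ℝ => (p.1 ^ 2)⁻¹ * W' p.1 p.2) := by
      exact (Measurable.inv (by fun_prop)).mul hw
    have h2 : Measurable (fun p : ℝ × ℝ => |p.1| ^ (-(1:ℝ)/2) * ψ₂ ((x - p.2) / p.1)) := by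
      fun_prop
    exact (h1.mul h2).stronglyMeasurable
  -- the set of large scales
  set S : Set ℝ := {a : ℝ | 1 ≤ |a|} with hSdef
  have hSm : MeasurableSet S := (isClosed_le continuous_const continuous_abs).measurableSet
  have hS0 : ∀ a ∈ S, a ≠ 0 := by
    intro a ha h
    rw [hSdef] at ha
    rw [h] at ha
    simp at ha
    linarith
  have hfL' : ∀ x, fL x = ∫ a in S, ∫ b, φ x a b := by
    intro x
    rw [hfL x]
    refine setIntegral_congr_fun hSm (fun a haS => ?_)
    have ha0 : a ≠ 0 := hS0 a haS
    refine integral_congr_ae (Filter.Eventually.of_forall fun b => ?_)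
    simp only [hφdef]
    rw [hWW' a ha0 b]
  -- pointwise bound on φ
  have hφbd : ∀ (x a : ℝ), a ≠ 0 → ∀ b, |φ x a b| ≤ (T a)^5 * (M * B) := by
    intro x a ha b
    have habs : |φ x a b| = (T a)^4 * |W' a b| * (T a * |ψ₂ ((x - b) / a)|) := by
      simp only [hφdef]
      rw [abs_mul, abs_mul, abs_mul, abs_inv, abs_pow, sq_abs,
        abs_of_nonneg (hTnn a), ← hT4 a ha]
    rw [habs]
    calc (T a)^4 * |W' a b| * (T a * |ψ₂ ((x - b) / a)|)
        ≤ (T a)^4 * M * (T a * B) := by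
          have h1 := hWbd a ha b
          have h2 := hψ₂bdd ((x - b) / a)
          gcongr <;> positivity
      _ = (T a)^5 * (M * B) := by ring
  -- support of φ
  have hφsupp : ∀ (x a : ℝ), a ≠ 0 → ∀ b, φ x a b ≠ 0 → |x - b| ≤ R * |a| := by
    intro x a ha b hne
    have hψne : ψ₂ ((x - b) / a) ≠ 0 := by
      intro h
      apply hne
      simp only [hφdef, h, mul_zero]
    have hmem := hψ₂_supp hψne
    have habs : |(x - b) / a| ≤ R := abs_le.2 ⟨hmem.1, hmem.2⟩
    rw [abs_div] at habs
    calc |x - b| = |x - b| / |a| * |a| := by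
          field_simp
      _ ≤ R * |a| := by
          have := abs_pos.2 ha
          gcongr
  -- integrability and bound of the inner integral
  have hφint : ∀ (x a : ℝ), a ∈ S →
      Integrable (fun b => φ x a b) (volume : Measure ℝ) ∧
      |∫ b, φ x a b| ≤ (2 * R * (M * B)) * (T a)^3 := by
    intro x a haS
    have ha0 : a ≠ 0 := hS0 a haS
    have hsect : AEStronglyMeasurable (fun b => φ x a b) (volume : Measure ℝ) := by
      have := ((hφmeas x).comp_measurable (measurable_const.prodMk measurable_id)
        : StronglyMeasurable fun b : ℝ => φ x a b)
      exact this.aestronglyMeasurable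
    have h := integrable_and_bound_of_support hsect (C := (T a)^5 * (M * B)) (x := x)
      (r := R * |a|) (by positivity) (by positivity) (hφbd x a ha0) (hφsupp x a ha0)
    refine ⟨h.1, ?_⟩
    refine le_trans h.2 (le_of_eq ?_)
    have h53 : (T a)^5 * |a| = (T a)^3 := by
      calc (T a)^5 * |a| = (T a)^3 * ((T a)^2 * |a|) := by ring
        _ = (T a)^3 := by rw [hT2 a ha0, mul_one]
    calc (T a)^5 * (M * B) * (2 * (R * |a|)) = 2 * R * (M * B) * ((T a)^5 * |a|) := by ring
      _ = (2 * R * (M * B)) * (T a)^3 := by rw [h53]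
  -- key difference bound
  have hkey : ∀ (x δ : ℝ), |δ| ≤ 1 → ∀ a ∈ S,
      |(∫ b, φ (x + δ) a b) - ∫ b, φ x a b| ≤ (2 * (R+1) * (M * K) * |δ|) * (T a)^5 := by
    intro x δ hδ a haS
    have ha0 : a ≠ 0 := hS0 a haS
    have ha1 : 1 ≤ |a| := haS
    have hsub : (∫ b, φ (x + δ) a b) - ∫ b, φ x a b
        = ∫ b, (φ (x + δ) a b - φ x a b) :=
      (integral_sub (hφint (x + δ) a haS).1 (hφint x a haS).1).symm
    rw [hsub]
    have hTinv : (T a)^2 = |a|⁻¹ := eq_inv_of_mul_eq_one_left (hT2 a ha0)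
    -- pointwise bound on the difference
    have hDbd : ∀ b, |φ (x + δ) a b - φ x a b| ≤ (T a)^7 * (M * (K * |δ|)) := by
      intro b
      have hsplit : (x + δ - b) / a = (x - b) / a + δ / a := by ring
      have hlip : |ψ₂ ((x + δ - b) / a) - ψ₂ ((x - b) / a)| ≤ K * (|δ| * (T a)^2) := by
        rw [hsplit]
        refine le_trans (hψ₂_lip ((x - b) / a) (δ / a)) (le_of_eq ?_)
        rw [abs_div, hTinv, div_eq_mul_inv]
      have heq : φ (x + δ) a b - φ x a b
          = (a ^ 2)⁻¹ * W' a b * T a * (ψ₂ ((x + δ - b) / a) - ψ₂ ((x - b) / a)) := by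
        simp only [hφdef]; ring
      rw [heq]
      have habs : |(a ^ 2)⁻¹ * W' a b * T a * (ψ₂ ((x + δ - b) / a) - ψ₂ ((x - b) / a))|
          = (T a)^4 * |W' a b| * T a * |ψ₂ ((x + δ - b) / a) - ψ₂ ((x - b) / a)| := by
        rw [abs_mul, abs_mul, abs_mul, abs_inv, abs_pow, sq_abs,
          abs_of_nonneg (hTnn a), ← hT4 a ha0]
      rw [habs]
      calc (T a)^4 * |W' a b| * T a * |ψ₂ ((x + δ - b) / a) - ψ₂ ((x - b) / a)|
          ≤ (T a)^4 * M * T a * (K * (|δ| * (T a)^2)) := by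
            have h1 := hWbd a ha0 b
            gcongr <;> positivity
        _ = (T a)^7 * (M * (K * |δ|)) := by ring
    -- support of the difference
    have hDsupp : ∀ b, φ (x + δ) a b - φ x a b ≠ 0 → |x - b| ≤ (R + 1) * |a| := by
      intro b hne
      have : φ (x + δ) a b ≠ 0 ∨ φ x a b ≠ 0 := by
        by_contra h
        push_neg at h
        exact hne (by rw [h.1, h.2, sub_zero])
      rcases this with h | h
      · have := hφsupp (x + δ) a ha0 b h
        have habs : |x - b| ≤ |x + δ - b| + |δ| := by
          have : x - b = (x + δ - b) + (-δ) := by ring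
          rw [this]
          calc |(x + δ - b) + (-δ)| ≤ |x + δ - b| + |-δ| := abs_add_le _ _
            _ = |x + δ - b| + |δ| := by rw [abs_neg]
        calc |x - b| ≤ |x + δ - b| + |δ| := habs
          _ ≤ R * |a| + 1 := by
              refine add_le_add ?_ hδ
              exact this
          _ ≤ R * |a| + |a| := by linarith
          _ = (R + 1) * |a| := by ring
      · have := hφsupp x a ha0 b h
        calc |x - b| ≤ R * |a| := this
          _ ≤ (R + 1) * |a| := by nlinarith
    have hDsect : AEStronglyMeasurable (fun b => φ (x + δ) a b - φ x a b)
        (volume : Measure ℝ) :=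
      ((hφint (x + δ) a haS).1.aestronglyMeasurable).sub
        ((hφint x a haS).1.aestronglyMeasurable)
    have h := integrable_and_bound_of_support hDsect (C := (T a)^7 * (M * (K * |δ|))) (x := x)
      (r := (R + 1) * |a|) (by positivity) (by positivity) hDbd hDsupp
    refine le_trans h.2 (le_of_eq ?_)
    have h75 : (T a)^7 * |a| = (T a)^5 := by
      calc (T a)^7 * |a| = (T a)^5 * ((T a)^2 * |a|) := by ring
        _ = (T a)^5 := by rw [hT2 a ha0, mul_one]
    calc (T a)^7 * (M * (K * |δ|)) * (2 * ((R + 1) * |a|))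
        = (2 * (R + 1) * (M * K) * |δ|) * ((T a)^7 * |a|) := by ring
      _ = (2 * (R + 1) * (M * K) * |δ|) * (T a)^5 := by rw [h75]
  -- integrability of powers of T on S
  have hTint : ∀ n : ℕ, 3 ≤ n →
      IntegrableOn (fun a : ℝ => (T a)^n) S (volume : Measure ℝ) := by
    intro n hn
    have h : IntegrableOn (fun a : ℝ => |a| ^ (-(n:ℝ)/2)) S (volume : Measure ℝ) := by
      refine integrableOn_abs_rpow ?_
      rw [div_lt_iff₀ (by norm_num : (0:ℝ) < 2)]
      have : (3:ℝ) ≤ (n:ℝ) := by exact_mod_cast hn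
      linarith
    exact h.congr_fun (fun a _ => (hTpow n a).symm) hSm
  -- outer measurability / integrability
  have houter : ∀ x : ℝ, IntegrableOn (fun a => ∫ b, φ x a b) S (volume : Measure ℝ) := by
    intro x
    have hmeas : AEStronglyMeasurable (fun a => ∫ b, φ x a b)
        ((volume : Measure ℝ).restrict S) :=
      ((hφmeas x).integral_prod_right').aestronglyMeasurable.restrict
    refine Integrable.mono' (((hTint 3 le_rfl).const_mul (2 * R * (M * B)))) hmeas ?_
    refine (ae_restrict_iff' hSm).2 (Filter.Eventually.of_forall (fun a haS => ?_))
    simpa only [Real.norm_eq_abs] using (hφint x a haS).2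
  -- assembling everything
  set I₅ : ℝ := ∫ a in S, (T a)^5 with hI₅def
  have hI₅0 : 0 ≤ I₅ := setIntegral_nonneg hSm (fun a _ => by positivity)
  refine ⟨2 * (R + 1) * (M * K) * I₅, by positivity, ?_⟩
  intro x δ hδ
  rw [hfL' (x + δ), hfL' x, ← integral_sub (houter (x + δ)) (houter x)]
  calc |∫ a in S, ((∫ b, φ (x + δ) a b) - ∫ b, φ x a b)|
      ≤ ∫ a in S, ‖(∫ b, φ (x + δ) a b) - ∫ b, φ x a b‖ := by
        simpa using norm_integral_le_integral_norm
          (fun a => (∫ b, φ (x + δ) a b) - ∫ b, φ x a b)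
    _ ≤ ∫ a in S, (2 * (R + 1) * (M * K) * |δ|) * (T a)^5 := by
        refine integral_mono_of_nonneg (Filter.Eventually.of_forall fun a => norm_nonneg _)
          ((hTint 5 (by norm_num)).const_mul _) ?_
        refine (ae_restrict_iff' hSm).2 (Filter.Eventually.of_forall (fun a haS => ?_))
        simpa only [Real.norm_eq_abs] using hkey x δ hδ a haS
    _ = (2 * (R + 1) * (M * K) * |δ|) * I₅ := integral_const_mul _ _
    _ = 2 * (R + 1) * (M * K) * I₅ * |δ| := by ring
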